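/- Let A and B be natural numbers with A < 2^64 and B < 2^64. Let D = (A + B) mod 2^64, let m = 1 if D < A and m = 0 otherwise, let G be the number of 1s in the binary representation of D (so G ≤ 64), and let t = G + 65·m. Then: t < 64 if and only if A + B < 2^64 − 1 (case N); t = 64 if and only if A + B = 2^64 − 1 (case P); and t > 64 if and only if A + B ≥ 2^64 (case G). -/

import Mathlib

lemma ofDigits_replicate_one (k : ℕ) :
    Nat.ofDigits 2 (List.replicate k 1) = 2 ^ k - 1 := by
  induction k with
  | zero => simp
  | succ n ih =>
    rw [List.replicate_succ, Nat.ofDigits_cons, ih]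
    have h : 1 ≤ 2 ^ n := Nat.one_le_two_pow
    omega

lemma digits_length_le (n : ℕ) (hn : n < 2 ^ 64) :
    (Nat.digits 2 n).length ≤ 64 := by
  rcases eq_or_ne n 0 with h | h
  · simp [h]
  · rw [Nat.digits_len 2 n (by norm_num) h]
    have : Nat.log 2 n < 64 := Nat.log_lt_of_lt_pow h hn
    omega

lemma popcount_le (n : ℕ) (hn : n < 2 ^ 64) :
    (Nat.digits 2 n).count 1 ≤ 64 := by
  calc (Nat.digits 2 n).count 1 ≤ (Nat.digits 2 n).length := List.count_le_length
    _ ≤ 64 := digits_length_le n hn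

lemma popcount_eq_64_iff (n : ℕ) (hn : n < 2 ^ 64) :
    (Nat.digits 2 n).count 1 = 64 ↔ n = 2 ^ 64 - 1 := by
  constructor
  · intro h
    have hlen : (Nat.digits 2 n).length ≤ 64 := digits_length_le n hn
    have hcl : (Nat.digits 2 n).count 1 ≤ (Nat.digits 2 n).length :=
      List.count_le_length
    have hlen' : (Nat.digits 2 n).length = 64 := by omega
    have hall : ∀ b ∈ Nat.digits 2 n, 1 = b := by
      rw [← List.count_eq_length]
      omega
    have hrep : Nat.digits 2 n = List.replicate 64 1 := by
      rw [List.eq_replicate_iff]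
      exact ⟨hlen', fun b hb => (hall b hb).symm⟩
    have := Nat.ofDigits_digits 2 n
    rw [hrep, ofDigits_replicate_one] at this
    omega
  · intro h
    subst h
    have hd : Nat.digits 2 (Nat.ofDigits 2 (List.replicate 64 1)) =
        List.replicate 64 1 := by
      apply Nat.digits_ofDigits 2 (by norm_num)
      · intro d hd
        simp_all
      · simp
    rw [ofDigits_replicate_one] at hd
    rw [hd]
    simp

/-- The native-radix (2^64) operand `t = popcount(D) + 65·m`
classifies the case (N/P/G) of the 64-bit addition of `A` and `B`. -/
theorem native_radix_operand_classifies_case (A B : ℕ)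
    (hA : A < 2 ^ 64) (hB : B < 2 ^ 64)
    (D m G t : ℕ)
    (hD : D = (A + B) % 2 ^ 64)
    (hm : m = if D < A then 1 else 0)
    (hG : G = (Nat.digits 2 D).count 1)
    (ht : t = G + 65 * m) :
    (t < 64 ↔ A + B < 2 ^ 64 - 1) ∧
    (t = 64 ↔ A + B = 2 ^ 64 - 1) ∧
    (t > 64 ↔ 2 ^ 64 ≤ A + B) := by
  by_cases hc : A + B < 2 ^ 64
  · have hDeq : D = A + B := by rw [hD, Nat.mod_eq_of_lt hc]
    have hm0 : m = 0 := by
      rw [hm, if_neg]; omega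
    have hDlt : D < 2 ^ 64 := by omega
    have h1 : G ≤ 64 := hG ▸ popcount_le D hDlt
    have h2 : G = 64 ↔ D = 2 ^ 64 - 1 := hG ▸ popcount_eq_64_iff D hDlt
    have ht' : t = G := by omega
    refine ⟨?_, ?_, ?_⟩ <;> constructor <;> intro h <;> omega
  · have hAB : A + B < 2 * 2 ^ 64 := by omega
    have hDeq : D = A + B - 2 ^ 64 := by
      rw [hD, Nat.mod_eq_sub_mod (by omega), Nat.mod_eq_of_lt (by omega)]
    have hm1 : m = 1 := by rw [hm, if_pos]; omega
    refine ⟨?_, ?_, ?_⟩ <;> constructor <;> intro h <;> omega
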